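/- Let F_q be a finite field of odd characteristic, let γ ∈ F_{q^3} be a root of a degree-3 irreducible polynomial over F_q, let δ_1, …, δ_n be distinct nonzero elements of F_q, and set α_i = δ_i + δ_i² γ for i ∈ [n]. Then the [n,2] Reed–Solomon code over F_{q^3} with evaluation vector (α_1, …, α_n) can correct any n − 3 insertion–deletion errors; equivalently, any two distinct codewords have a longest common subsequence of length at most 2. -/

import Mathlib

open Polynomial

/-- `1, γ, γ²` are linearly independent over `F` when `γ` is a root of an irreducible
cubic. -/
lemma rs2_aux_indep {F E : Type*} [Field F] [Field E] [Algebra F E]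
    (γ : E) (φ : Polynomial F) (hφ : Irreducible φ) (hdeg : φ.degree = 3)
    (hroot : Polynomial.aeval γ φ = 0) :
    ∀ x0 x1 x2 : F,
      algebraMap F E x0 + algebraMap F E x1 * γ + algebraMap F E x2 * γ ^ 2 = 0 →
      x0 = 0 ∧ x1 = 0 ∧ x2 = 0 := by
  have hφ0 : φ ≠ 0 := hφ.ne_zero
  have hint : IsIntegral F γ := (IsAlgebraic.isIntegral ⟨φ, hφ0, hroot⟩)
  have hdvd : minpoly F γ ∣ φ := minpoly.dvd F γ hroot
  have hassoc : Associated φ (minpoly F γ) := by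
    rcases hφ.dvd_iff.mp hdvd with h | h
    · exact absurd (Polynomial.natDegree_eq_zero_of_isUnit h)
        (minpoly.natDegree_pos hint).ne'
    · exact h
  have hmindeg : (minpoly F γ).degree = 3 := by
    rw [← degree_eq_degree_of_associated hassoc, hdeg]
  intro x0 x1 x2 h
  by_contra hcon
  set p : Polynomial F := C x2 * X ^ 2 + C x1 * X + C x0 with hp
  have hp0 : p.coeff 0 = x0 := by simp [hp]
  have hp1 : p.coeff 1 = x1 := by simp [hp]
  have hp2 : p.coeff 2 = x2 := by simp [hp, coeff_X_pow]
  have hpne : p ≠ 0 := by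
    intro h0
    apply hcon
    refine ⟨?_, ?_, ?_⟩ <;> [rw [← hp0]; rw [← hp1]; rw [← hp2]] <;> rw [h0] <;> simp
  have hpe : Polynomial.aeval γ p = 0 := by
    simp only [hp, map_add, map_mul, map_pow, aeval_C, aeval_X]
    linear_combination h
  have hle := minpoly.degree_le_of_ne_zero F γ hpne hpe
  rw [hmindeg] at hle
  have := hle.trans (degree_quadratic_le (a := x2) (b := x1) (c := x0))
  norm_num at this

/-- The key field computation. -/
lemma rs2_aux_key {F : Type*} [Field F] (h2 : (2:F) ≠ 0)
    {a b c x y z : F} (hab : a ≠ b) (hac : a ≠ c) (hbc : b ≠ c)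
    (hxy : x ≠ y)
    (e1 : (y-x)*(c-a) = (z-x)*(b-a))
    (e2 : (y-x)*(c^2-a^2) + (y^2-x^2)*(c-a) = (z-x)*(b^2-a^2) + (z^2-x^2)*(b-a))
    (e3 : (y^2-x^2)*(c^2-a^2) = (z^2-x^2)*(b^2-a^2)) :
    x = a ∧ y = b ∧ z = c := by
  have hK : (y-x)*(c-a) ≠ 0 :=
    mul_ne_zero (sub_ne_zero.mpr hxy.symm) (sub_ne_zero.mpr hac.symm)
  have h4 : (y-x)*(c-a)*((c+y)-(b+z)) = 0 := by
    linear_combination e2 - (a+b+x+z)*e1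
  have hcz : c + y = b + z := sub_eq_zero.mp ((mul_eq_zero.mp h4).resolve_left hK)
  have h5 : (y-x)*(c-a)*((y+x)*(c+a) - (z+x)*(b+a)) = 0 := by
    linear_combination e3 - ((z+x)*(b+a))*e1
  have hii : (y+x)*(c+a) = (z+x)*(b+a) :=
    sub_eq_zero.mp ((mul_eq_zero.mp h5).resolve_left hK)
  have h6' : (c-b)*((y-x)-(b-a)) = 0 := by
    linear_combination e1 - (b-a)*hcz
  have h6 : (y-x)-(b-a) = 0 :=
    (mul_eq_zero.mp h6').resolve_left (sub_ne_zero.mpr hbc.symm)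
  have hy : y = x + (b-a) := by linear_combination h6
  have hz : z = x + (c-a) := by linear_combination h6 - hcz
  subst hy hz
  have h7 : 2*((c-b)*(x-a)) = 0 := by linear_combination hii
  have hx : x = a := sub_eq_zero.mp
    (((mul_eq_zero.mp ((mul_eq_zero.mp h7).resolve_left h2)).resolve_left
      (sub_ne_zero.mpr hbc.symm)))
  exact ⟨hx, by rw [hx]; ring, by rw [hx]; ring⟩

theorem rs2_construction_corrects_insdel
    {F E : Type*} [Field F] [Fintype F] [Field E] [Algebra F E]
    (hchar : ringChar F ≠ 2) (hrank : Module.finrank F E = 3)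
    (γ : E) (φ : Polynomial F) (hφ : Irreducible φ) (hdeg : φ.degree = 3)
    (hroot : Polynomial.aeval γ φ = 0)
    {n : ℕ} (δ : Fin n → F) (hδinj : Function.Injective δ) (hδ0 : ∀ i, δ i ≠ 0)
    (α : Fin n → E)
    (hα : ∀ i, α i = algebraMap F E (δ i) + algebraMap F E (δ i) ^ 2 * γ) :
    ∀ f g : Polynomial E, f.degree < 2 → g.degree < 2 →
      (fun i : Fin n => Polynomial.eval (α i) f) ≠
        (fun i : Fin n => Polynomial.eval (α i) g) →
      ∀ z : List E, z.Sublist (List.ofFn fun i : Fin n => Polynomial.eval (α i) f) →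
        z.Sublist (List.ofFn fun i : Fin n => Polynomial.eval (α i) g) →
        z.length ≤ 2 := by
  have indep := rs2_aux_indep γ φ hφ hdeg hroot
  have h2 : (2:F) ≠ 0 := Ring.two_ne_zero hchar
  -- injectivity of α
  have hαinj : Function.Injective α := by
    intro i j hij
    rw [hα i, hα j] at hij
    have h0 : algebraMap F E (δ i - δ j) + algebraMap F E (δ i ^ 2 - δ j ^ 2) * γ
        + algebraMap F E 0 * γ ^ 2 = 0 := by
      simp only [map_sub, map_pow, map_zero, zero_mul, add_zero]
      linear_combination hij
    exact hδinj (sub_eq_zero.mp (indep _ _ _ h0).1)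
  intro f g hf hg hne z hzf hzg
  by_contra hlen
  push_neg at hlen
  -- extract three matched positions
  obtain ⟨u, hu⟩ := List.sublist_iff_exists_fin_orderEmbedding_get_eq.mp hzf
  obtain ⟨v, hv⟩ := List.sublist_iff_exists_fin_orderEmbedding_get_eq.mp hzg
  have hL : (List.ofFn fun i : Fin n => Polynomial.eval (α i) f).length = n :=
    List.length_ofFn
  have hL' : (List.ofFn fun i : Fin n => Polynomial.eval (α i) g).length = n :=
    List.length_ofFn
  set k0 : Fin z.length := ⟨0, by omega⟩
  set k1 : Fin z.length := ⟨1, by omega⟩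
  set k2 : Fin z.length := ⟨2, by omega⟩
  set i0 : Fin n := Fin.cast hL (u k0)
  set i1 : Fin n := Fin.cast hL (u k1)
  set i2 : Fin n := Fin.cast hL (u k2)
  set j0 : Fin n := Fin.cast hL' (v k0)
  set j1 : Fin n := Fin.cast hL' (v k1)
  set j2 : Fin n := Fin.cast hL' (v k2)
  have hind : ∀ k : Fin z.length,
      Polynomial.eval (α (Fin.cast hL (u k))) f
        = Polynomial.eval (α (Fin.cast hL' (v k))) g := by
    intro k
    have h1 := hu k
    have h2 := hv k
    rw [List.get_ofFn] at h1 h2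
    exact h1.symm.trans h2
  have H0 : Polynomial.eval (α i0) f = Polynomial.eval (α j0) g := hind k0
  have H1 : Polynomial.eval (α i1) f = Polynomial.eval (α j1) g := hind k1
  have H2 : Polynomial.eval (α i2) f = Polynomial.eval (α j2) g := hind k2
  -- distinctness of indices
  have huinj : ∀ k k' : Fin z.length, k ≠ k' → Fin.cast hL (u k) ≠ Fin.cast hL (u k') := by
    intro k k' hkk' h
    have h' := congrArg Fin.val h
    simp only [Fin.coe_cast] at h'
    exact hkk' (u.injective (Fin.ext h'))
  have hvinj : ∀ k k' : Fin z.length, k ≠ k' → Fin.cast hL' (v k) ≠ Fin.cast hL' (v k') := by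
    intro k k' hkk' h
    have h' := congrArg Fin.val h
    simp only [Fin.coe_cast] at h'
    exact hkk' (v.injective (Fin.ext h'))
  have hk01 : k0 ≠ k1 := by simp [k0, k1, Fin.ext_iff]
  have hk02 : k0 ≠ k2 := by simp [k0, k2, Fin.ext_iff]
  have hk12 : k1 ≠ k2 := by simp [k1, k2, Fin.ext_iff]
  have hi01 : i0 ≠ i1 := huinj _ _ hk01
  have hi02 : i0 ≠ i2 := huinj _ _ hk02
  have hi12 : i1 ≠ i2 := huinj _ _ hk12
  have hj01 : j0 ≠ j1 := hvinj _ _ hk01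
  -- linear form of f and g
  have hf1 : f.degree ≤ 1 := by
    rcases Polynomial.degree_le_iff_coeff_zero f 1 |>.symm with _
    exact Order.le_of_lt_succ (by exact_mod_cast hf)
  have hg1 : g.degree ≤ 1 := Order.le_of_lt_succ (by exact_mod_cast hg)
  have hfeq := Polynomial.eq_X_add_C_of_degree_le_one hf1
  have hgeq := Polynomial.eq_X_add_C_of_degree_le_one hg1
  set f1 := f.coeff 1
  set f0 := f.coeff 0
  set g1 := g.coeff 1
  set g0 := g.coeff 0
  have hfe : ∀ t : E, Polynomial.eval t f = f1 * t + f0 := by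
    intro t; conv_lhs => rw [hfeq]
    simp
  have hge : ∀ t : E, Polynomial.eval t g = g1 * t + g0 := by
    intro t; conv_lhs => rw [hgeq]
    simp
  rw [hfe, hge] at H0 H1 H2
  -- case analysis on leading coefficients
  by_cases hf10 : f1 = 0
  · by_cases hg10 : g1 = 0
    · apply hne
      funext i
      rw [hfe, hge, hf10, hg10]
      rw [hf10, hg10] at H0
      simpa using H0
    · -- g injective on α's : α j0 = α j1, contradiction
      rw [hf10] at H0 H1
      have : g1 * α j0 = g1 * α j1 := by linear_combination H1 - H0
      exact hj01 (hαinj (mul_left_cancel₀ hg10 this))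
  · by_cases hg10 : g1 = 0
    · rw [hg10] at H0 H1
      have : f1 * α i0 = f1 * α i1 := by linear_combination H0 - H1
      exact hi01 (hαinj (mul_left_cancel₀ hf10 this))
    · -- main case
      have hA : g1 * (α j1 - α j0) = f1 * (α i1 - α i0) := by linear_combination H0 - H1
      have hB : g1 * (α j2 - α j0) = f1 * (α i2 - α i0) := by linear_combination H0 - H2
      have hcross : (α j1 - α j0) * (α i2 - α i0) = (α j2 - α j0) * (α i1 - α i0) := by
        apply mul_left_cancel₀ (mul_ne_zero hg10 hf10)
        linear_combination (f1 * (α i2 - α i0)) * hA - (f1 * (α i1 - α i0)) * hB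
      rw [hα i0, hα i1, hα i2, hα j0, hα j1, hα j2] at hcross
      have hE : algebraMap F E ((δ j1-δ j0)*(δ i2-δ i0) - (δ j2-δ j0)*(δ i1-δ i0))
          + algebraMap F E ((δ j1-δ j0)*(δ i2^2-δ i0^2)+(δ j1^2-δ j0^2)*(δ i2-δ i0)
              - ((δ j2-δ j0)*(δ i1^2-δ i0^2)+(δ j2^2-δ j0^2)*(δ i1-δ i0))) * γ
          + algebraMap F E ((δ j1^2-δ j0^2)*(δ i2^2-δ i0^2)
              - (δ j2^2-δ j0^2)*(δ i1^2-δ i0^2)) * γ ^ 2 = 0 := by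
        simp only [map_sub, map_add, map_mul, map_pow]
        linear_combination hcross
      obtain ⟨E0, E1, E2⟩ := indep _ _ _ hE
      have hab : δ i0 ≠ δ i1 := fun h => hi01 (hδinj h)
      have hac : δ i0 ≠ δ i2 := fun h => hi02 (hδinj h)
      have hbc : δ i1 ≠ δ i2 := fun h => hi12 (hδinj h)
      have hxy : δ j0 ≠ δ j1 := fun h => hj01 (hδinj h)
      obtain ⟨hxa, hyb, -⟩ := rs2_aux_key h2 hab hac hbc hxy
        (sub_eq_zero.mp E0) (sub_eq_zero.mp E1) (sub_eq_zero.mp E2)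
      -- so α j0 = α i0, α j1 = α i1
      have hw0 : α j0 = α i0 := by rw [hα j0, hα i0, hxa]
      have hw1 : α j1 = α i1 := by rw [hα j1, hα i1, hyb]
      rw [hw0] at H0
      rw [hw1] at H1
      have hne01 : α i0 ≠ α i1 := fun h => hi01 (hαinj h)
      have hfg1 : f1 = g1 := by
        have : (f1 - g1) * (α i0 - α i1) = 0 := by linear_combination H0 - H1
        exact sub_eq_zero.mp ((mul_eq_zero.mp this).resolve_right (sub_ne_zero.mpr hne01))
      have hfg0 : f0 = g0 := by linear_combination H0 - (α i0) * hfg1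
      exact hne (funext fun i => by rw [hfe, hge, hfg1, hfg0])
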